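/- Let (u^k_n, v^k_n) be a solution of the QLB scheme such that n ↦ |u^0_n|² + |v^0_n|² is summable over ℤ. Then for every k ≥ 0 the function n ↦ |u^k_n|² + |v^k_n|² is summable and ∑_{n∈ℤ}(|u^k_n|² + |v^k_n|²) = ∑_{n∈ℤ}(|u^0_n|² + |v^0_n|²). -/

import Mathlib

open Complex

noncomputable section

/-- `G(u,v) = conj(u)·v + u·conj(v)`. -/
def Gc (u v : ℂ) : ℂ := (starRingEnd ℂ) u * v + u * (starRingEnd ℂ) v

/-- One step of the quantum lattice Boltzmann (QLB) scheme:
`a, b` are the values `u^k_n, v^k_n` and `a', b'` the values `u^{k+1}_{n+1}, v^{k+1}_{n-1}`. -/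
def QLBStep (h m α β : ℝ) (a b a' b' : ℂ) : Prop :=
  a' - a = (Complex.I * (m : ℂ) * (h : ℂ) / 2) * (b' + b)
      + (Complex.I * (α : ℂ) * (h : ℂ) / 2) * (a' + a) * ((‖b‖ ^ 2 : ℝ) : ℂ)
      + (Complex.I * (β : ℂ) * (h : ℂ) / 2) * (b' + b) * Gc a b
  ∧ b' - b = (Complex.I * (m : ℂ) * (h : ℂ) / 2) * (a' + a)
      + (Complex.I * (α : ℂ) * (h : ℂ) / 2) * (b' + b) * ((‖a‖ ^ 2 : ℝ) : ℂ)
      + (Complex.I * (β : ℂ) * (h : ℂ) / 2) * (a' + a) * Gc a b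

/-- `(u, v)` is a solution of the QLB scheme. -/
def IsQLB (h m α β : ℝ) (u v : ℕ → ℤ → ℂ) : Prop :=
  ∀ (k : ℕ) (n : ℤ), QLBStep h m α β (u k n) (v k n) (u (k + 1) (n + 1)) (v (k + 1) (n - 1))

lemma step_conserve (h m α β : ℝ) {a b a' b' : ℂ} (H : QLBStep h m α β a b a' b') :
    ‖a'‖ ^ 2 + ‖b'‖ ^ 2 = ‖a‖ ^ 2 + ‖b‖ ^ 2 := by
  obtain ⟨e1, e2⟩ := H
  simp only [Gc] at e1 e2
  have ce1 := congrArg (starRingEnd ℂ) e1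
  have ce2 := congrArg (starRingEnd ℂ) e2
  simp only [map_sub, map_add, map_mul, map_div₀, Complex.conj_I, Complex.conj_ofReal,
    map_ofNat, Complex.conj_conj] at ce1 ce2
  have key : (starRingEnd ℂ) a' * a' + (starRingEnd ℂ) b' * b'
      = (starRingEnd ℂ) a * a + (starRingEnd ℂ) b * b := by
    linear_combination (((starRingEnd ℂ) a' + (starRingEnd ℂ) a) * e1
      + ((starRingEnd ℂ) b' + (starRingEnd ℂ) b) * e2 + (a' + a) * ce1 + (b' + b) * ce2) / 2
  rw [Complex.sq_norm, Complex.sq_norm, Complex.sq_norm, Complex.sq_norm]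
  apply Complex.ofReal_injective
  push_cast [Complex.normSq_eq_conj_mul_self]
  exact key

/-- Conservation of the total charge: summability of the initial data propagates
and the total sum is conserved at every time level. -/
theorem stmt1 (h m α β : ℝ) (hh0 : 0 < h) (hm : 0 ≤ m)
    (u v : ℕ → ℤ → ℂ) (huv : IsQLB h m α β u v)
    (hsum : Summable fun n : ℤ => ‖u 0 n‖ ^ 2 + ‖v 0 n‖ ^ 2) :
    ∀ k : ℕ,
      (Summable fun n : ℤ => ‖u k n‖ ^ 2 + ‖v k n‖ ^ 2) ∧
      (∑' n : ℤ, (‖u k n‖ ^ 2 + ‖v k n‖ ^ 2))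
        = ∑' n : ℤ, (‖u 0 n‖ ^ 2 + ‖v 0 n‖ ^ 2) := by
  intro k
  induction k with
  | zero => exact ⟨hsum, rfl⟩
  | succ k ih =>
    obtain ⟨hS, hT⟩ := ih
    have key : ∀ n : ℤ,
        ‖u (k + 1) (n + 1)‖ ^ 2 + ‖v (k + 1) (n - 1)‖ ^ 2
          = ‖u k n‖ ^ 2 + ‖v k n‖ ^ 2 :=
      fun n => step_conserve h m α β (huv k n)
    have hg : Summable (fun n : ℤ =>
        ‖u (k + 1) (n + 1)‖ ^ 2 + ‖v (k + 1) (n - 1)‖ ^ 2) :=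
      hS.congr fun n => (key n).symm
    have hu1 : Summable (fun n : ℤ => ‖u (k + 1) (n + 1)‖ ^ 2) :=
      Summable.of_nonneg_of_le (fun n => sq_nonneg _)
        (fun n => le_add_of_nonneg_right (sq_nonneg _)) hg
    have hv1 : Summable (fun n : ℤ => ‖v (k + 1) (n - 1)‖ ^ 2) :=
      Summable.of_nonneg_of_le (fun n => sq_nonneg _)
        (fun n => le_add_of_nonneg_left (sq_nonneg _)) hg
    have hu : Summable (fun n : ℤ => ‖u (k + 1) n‖ ^ 2) :=
      (Equiv.addRight (1 : ℤ)).summable_iff.mp hu1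
    have hv : Summable (fun n : ℤ => ‖v (k + 1) n‖ ^ 2) :=
      (Equiv.subRight (1 : ℤ)).summable_iff.mp hv1
    refine ⟨hu.add hv, ?_⟩
    calc ∑' n : ℤ, (‖u (k + 1) n‖ ^ 2 + ‖v (k + 1) n‖ ^ 2)
        = (∑' n : ℤ, ‖u (k + 1) n‖ ^ 2)
          + ∑' n : ℤ, ‖v (k + 1) n‖ ^ 2 := Summable.tsum_add hu hv
      _ = (∑' n : ℤ, ‖u (k + 1) (n + 1)‖ ^ 2)
          + ∑' n : ℤ, ‖v (k + 1) (n - 1)‖ ^ 2 := by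
          rw [← (Equiv.addRight (1 : ℤ)).tsum_eq (fun n => ‖u (k + 1) n‖ ^ 2),
            ← (Equiv.subRight (1 : ℤ)).tsum_eq (fun n => ‖v (k + 1) n‖ ^ 2)]
          rfl
      _ = ∑' n : ℤ, (‖u (k + 1) (n + 1)‖ ^ 2
          + ‖v (k + 1) (n - 1)‖ ^ 2) := (Summable.tsum_add hu1 hv1).symm
      _ = ∑' n : ℤ, (‖u k n‖ ^ 2 + ‖v k n‖ ^ 2) := tsum_congr key
      _ = _ := hT


end
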